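/- Let P^{AE} be a normalized distribution on A × E with P^E(e) > 0 for all e, and let R ∈ ℝ. Define e_φ(R) := sup over t ∈ [0, 1/2] of ( −φ(t|A|E|P^{AE}) − t·R ) where φ(0) := 0, and e_H(R) := sup over s ∈ [0, 1] of ( −log Σ_{a,e} P^{AE}(a,e)^{1+s}·P^E(e)^{-s} − s·R ). Then (1/2)·e_H(R) ≤ e_φ(R) and e_φ(R) ≤ e_H(R). -/

import Mathlib

open scoped BigOperators

lemma exists_pos_of_sum_pos {A : Type*} [Fintype A] (v : A → ℝ) (hv : ∀ a, 0 ≤ v a)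
    (hS : 0 < ∑ a, v a) : ∃ a, 0 < v a := by
  by_contra h
  push_neg at h
  have : ∑ a, v a = 0 := Finset.sum_eq_zero (fun a _ => le_antisymm (h a) (hv a))
  linarith

lemma mul_rpow_sub_one (x c : ℝ) (hx : 0 ≤ x) (hc : c ≠ 0) :
    x * x ^ (c - 1) = x ^ c := by
  rcases hx.eq_or_lt with h | h
  · rw [← h, Real.zero_rpow hc, zero_mul]
  · calc x * x ^ (c - 1) = x ^ (1:ℝ) * x ^ (c - 1) := by rw [Real.rpow_one]
      _ = x ^ (1 + (c - 1)) := (Real.rpow_add h 1 (c-1)).symm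
      _ = x ^ c := by ring_nf

lemma aux_I {A : Type*} [Fintype A] (v : A → ℝ) (hv : ∀ a, 0 ≤ v a) {t : ℝ}
    (ht0 : 0 ≤ t) (ht1 : t ≤ 1/2) (hS : 0 < ∑ a, v a) :
    (∑ a, v a) ^ (-t) * ∑ a, v a ^ (1 + t) ≤ (∑ a, v a ^ (1/(1-t))) ^ (1-t) := by
  have h1t : (0:ℝ) < 1 - t := by linarith
  have hβ : 1 ≤ 1/(1-t) := by rw [le_div_iff₀ h1t]; linarith
  have hβ0 : (0:ℝ) < 1/(1-t) := lt_of_lt_of_le one_pos hβ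
  have key := Real.inner_le_weight_mul_Lp_of_nonneg Finset.univ hβ v (fun a => v a ^ t)
    hv (fun a => Real.rpow_nonneg (hv a) t)
  try simp only [] at key
  have e1 : ∀ a, v a * v a ^ t = v a ^ (1 + t) := by
    intro a
    have h := mul_rpow_sub_one (v a) (1 + t) (hv a) (by positivity)
    rw [show (1:ℝ) + t - 1 = t by ring] at h
    exact h
  have hc : t * (1/(1-t)) = 1/(1-t) - 1 := by field_simp; ring
  have e2 : ∀ a, v a * (v a ^ t) ^ (1/(1-t)) = v a ^ (1/(1-t)) := by
    intro a
    rw [← Real.rpow_mul (hv a), hc, mul_rpow_sub_one _ _ (hv a) hβ0.ne']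
  simp only [e1, e2] at key
  have einv : (1/(1-t))⁻¹ = 1 - t := by rw [one_div, inv_inv]
  rw [einv] at key
  have h1 : 1 - (1 - t) = t := by ring
  rw [h1] at key
  calc (∑ a, v a) ^ (-t) * ∑ a, v a ^ (1 + t)
      ≤ (∑ a, v a) ^ (-t) * ((∑ a, v a) ^ t * (∑ a, v a ^ (1/(1-t))) ^ (1-t)) := by
        apply mul_le_mul_of_nonneg_left key (Real.rpow_nonneg hS.le _)
    _ = (∑ a, v a ^ (1/(1-t))) ^ (1-t) := by
        rw [← mul_assoc, ← Real.rpow_add hS]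
        norm_num

lemma aux_II {A : Type*} [Fintype A] (v : A → ℝ) (hv : ∀ a, 0 ≤ v a) {t : ℝ}
    (ht0 : 0 ≤ t) (ht1 : t ≤ 1/2) (hS : 0 < ∑ a, v a) :
    ((∑ a, v a ^ (1/(1-t))) ^ (1-t)) ^ 2 ≤ (∑ a, v a) ^ (1 - 2*t) * ∑ a, v a ^ (1 + 2*t) := by
  have h1t : (0:ℝ) < 1 - t := by linarith
  have hβ0 : (0:ℝ) < 1/(1-t) := by positivity
  have hp : (1:ℝ) ≤ 2*(1-t) := by linarith
  have hp0 : (0:ℝ) < 2*(1-t) := by linarith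
  have key := Real.inner_le_weight_mul_Lp_of_nonneg Finset.univ hp v
    (fun a => v a ^ (t/(1-t))) hv (fun a => Real.rpow_nonneg (hv a) _)
  try simp only [] at key
  have e1 : ∀ a, v a * v a ^ (t/(1-t)) = v a ^ (1/(1-t)) := by
    intro a
    have h := mul_rpow_sub_one (v a) (1/(1-t)) (hv a) hβ0.ne'
    rw [show 1/(1-t) - 1 = t/(1-t) by field_simp; ring] at h
    exact h
  have e2 : ∀ a, v a * (v a ^ (t/(1-t))) ^ (2*(1-t)) = v a ^ (1 + 2*t) := by
    intro a
    rw [← Real.rpow_mul (hv a)]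
    have hc : t/(1-t) * (2*(1-t)) = (1 + 2*t) - 1 := by field_simp; ring
    rw [hc]
    exact mul_rpow_sub_one _ _ (hv a) (by positivity)
  simp only [e1, e2] at key
  have hXnn : 0 ≤ ∑ a, v a ^ (1/(1-t)) :=
    Finset.sum_nonneg (fun a _ => Real.rpow_nonneg (hv a) _)
  have hYnn : 0 ≤ ∑ a, v a ^ (1 + 2*t) :=
    Finset.sum_nonneg (fun a _ => Real.rpow_nonneg (hv a) _)
  have key2 := Real.rpow_le_rpow hXnn key (le_of_lt hp0)
  have eL : (∑ a, v a ^ (1/(1-t))) ^ (2*(1-t)) = ((∑ a, v a ^ (1/(1-t))) ^ (1-t)) ^ 2 := by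
    rw [← Real.rpow_natCast ((∑ a, v a ^ (1/(1-t))) ^ (1-t)) 2, ← Real.rpow_mul hXnn]
    norm_num
    ring_nf
  have eR : ((∑ a, v a) ^ (1 - (2*(1-t))⁻¹) * (∑ a, v a ^ (1 + 2*t)) ^ (2*(1-t))⁻¹) ^ (2*(1-t))
      = (∑ a, v a) ^ (1 - 2*t) * ∑ a, v a ^ (1 + 2*t) := by
    rw [Real.mul_rpow (Real.rpow_nonneg hS.le _) (Real.rpow_nonneg hYnn _),
      ← Real.rpow_mul hS.le, ← Real.rpow_mul hYnn, inv_mul_cancel₀ hp0.ne', Real.rpow_one]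
    congr 2
    field_simp
    ring
  rw [eL] at key2
  rw [eR] at key2
  exact key2

lemma psi_pos {A E : Type*} [Fintype A] [Fintype E] (P : A × E → ℝ) (hP0 : ∀ x, 0 ≤ P x)
    (hP1 : ∑ x, P x = 1) (hPE : ∀ e, 0 < ∑ a, P (a, e)) (s : ℝ) :
    0 < ∑ a : A, ∑ e : E, P (a, e) ^ (1 + s) * (∑ a', P (a', e)) ^ (-s) := by
  obtain ⟨⟨a0, e0⟩, hx0⟩ := exists_pos_of_sum_pos P hP0 (by rw [hP1]; norm_num)
  apply Finset.sum_pos'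
  · intro a _
    exact Finset.sum_nonneg fun e _ => mul_nonneg (Real.rpow_nonneg (hP0 _) _)
      (Real.rpow_nonneg (hPE e).le _)
  · refine ⟨a0, Finset.mem_univ _, Finset.sum_pos' (fun e _ => mul_nonneg
      (Real.rpow_nonneg (hP0 _) _) (Real.rpow_nonneg (hPE e).le _)) ⟨e0, Finset.mem_univ _, ?_⟩⟩
    exact mul_pos (Real.rpow_pos_of_pos hx0 _) (Real.rpow_pos_of_pos (hPE e0) _)

lemma phi_pos {A E : Type*} [Fintype A] [Fintype E] [Nonempty E] (P : A × E → ℝ)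
    (hP0 : ∀ x, 0 ≤ P x) (hPE : ∀ e, 0 < ∑ a, P (a, e)) (t : ℝ) :
    0 < ∑ e : E, (∑ a : A, P (a, e) ^ (1/(1-t))) ^ (1-t) := by
  apply Finset.sum_pos _ Finset.univ_nonempty
  intro e _
  obtain ⟨a0, ha0⟩ := exists_pos_of_sum_pos (fun a => P (a, e)) (fun a => hP0 _) (hPE e)
  apply Real.rpow_pos_of_pos
  exact Finset.sum_pos' (fun a _ => Real.rpow_nonneg (hP0 _) _)
    ⟨a0, Finset.mem_univ _, Real.rpow_pos_of_pos ha0 _⟩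

lemma sumE_B {A E : Type*} [Fintype A] [Fintype E] (P : A × E → ℝ) (hP0 : ∀ x, 0 ≤ P x)
    (hPE : ∀ e, 0 < ∑ a, P (a, e)) {t : ℝ} (ht0 : 0 ≤ t) (ht1 : t ≤ 1/2) :
    ∑ a : A, ∑ e : E, P (a, e) ^ (1 + t) * (∑ a', P (a', e)) ^ (-t)
      ≤ ∑ e : E, (∑ a : A, P (a, e) ^ (1/(1-t))) ^ (1-t) := by
  rw [Finset.sum_comm]
  apply Finset.sum_le_sum
  intro e _
  have h := aux_I (fun a => P (a, e)) (fun a => hP0 _) ht0 ht1 (hPE e)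
  calc ∑ a, P (a, e) ^ (1 + t) * (∑ a', P (a', e)) ^ (-t)
      = (∑ a', P (a', e)) ^ (-t) * ∑ a, P (a, e) ^ (1 + t) := by
        rw [← Finset.sum_mul, mul_comm]
    _ ≤ _ := h

lemma sumE_A {A E : Type*} [Fintype A] [Fintype E] (P : A × E → ℝ) (hP0 : ∀ x, 0 ≤ P x)
    (hP1 : ∑ x, P x = 1) (hPE : ∀ e, 0 < ∑ a, P (a, e)) {s : ℝ} (hs0 : 0 ≤ s) (hs1 : s ≤ 1) :
    (∑ e : E, (∑ a : A, P (a, e) ^ (1/(1 - s/2))) ^ (1 - s/2)) ^ 2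
      ≤ ∑ a : A, ∑ e : E, P (a, e) ^ (1 + s) * (∑ a', P (a', e)) ^ (-s) := by
  set X : E → ℝ := fun e => (∑ a : A, P (a, e) ^ (1/(1 - s/2))) ^ (1 - s/2) with hX
  have hXnn : ∀ e, 0 ≤ X e := fun e =>
    Real.rpow_nonneg (Finset.sum_nonneg fun a _ => Real.rpow_nonneg (hP0 _) _) _
  have hsum1 : ∑ e : E, ∑ a : A, P (a, e) = 1 := by
    rw [← hP1, Fintype.sum_prod_type, Finset.sum_comm]
  -- Cauchy-Schwarz
  have cs := Finset.sum_mul_sq_le_sq_mul_sq Finset.univ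
    (fun e => Real.sqrt (∑ a, P (a, e))) (fun e => X e / Real.sqrt (∑ a, P (a, e)))
  have e1 : ∀ e : E, Real.sqrt (∑ a, P (a, e)) * (X e / Real.sqrt (∑ a, P (a, e))) = X e := by
    intro e
    rw [mul_comm, div_mul_cancel₀ _ (ne_of_gt (Real.sqrt_pos.mpr (hPE e)))]
  have e2 : ∀ e : E, (Real.sqrt (∑ a, P (a, e))) ^ 2 = ∑ a, P (a, e) := fun e =>
    Real.sq_sqrt (hPE e).le
  have e3 : ∀ e : E, (X e / Real.sqrt (∑ a, P (a, e))) ^ 2 = X e ^ 2 / (∑ a, P (a, e)) := by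
    intro e
    rw [div_pow, Real.sq_sqrt (hPE e).le]
  simp only [e1, e2, e3] at cs
  rw [hsum1, one_mul] at cs
  refine le_trans cs ?_
  rw [Finset.sum_comm]
  apply Finset.sum_le_sum
  intro e _
  have h := aux_II (fun a => P (a, e)) (fun a => hP0 _) (t := s/2) (by linarith) (by linarith)
    (hPE e)
  rw [show (1:ℝ) - 2*(s/2) = 1 - s by ring, show (1:ℝ) + 2*(s/2) = 1 + s by ring] at h
  have hrw : ∑ a, P (a, e) ^ (1 + s) * (∑ a', P (a', e)) ^ (-s)
      = ((∑ a', P (a', e)) ^ (1 - s) * ∑ a, P (a, e) ^ (1 + s)) / (∑ a', P (a', e)) := by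
    calc ∑ a, P (a, e) ^ (1 + s) * (∑ a', P (a', e)) ^ (-s)
        = (∑ a, P (a, e) ^ (1 + s)) * (∑ a', P (a', e)) ^ (-s) := by rw [← Finset.sum_mul]
      _ = (∑ a, P (a, e) ^ (1 + s)) * ((∑ a', P (a', e)) ^ (1 - s) / (∑ a', P (a', e))) := by
          rw [show -s = (1 - s) - 1 by ring, Real.rpow_sub (hPE e), Real.rpow_one]
      _ = _ := by ring
  rw [hrw]
  exact (div_le_div_iff_of_pos_right (hPE e)).mpr h

lemma phi_lower {A E : Type*} [Fintype A] [Fintype E] (P : A × E → ℝ) (hP0 : ∀ x, 0 ≤ P x)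
    (a0 : A) (e0 : E) (hp : 0 < P (a0, e0)) {t : ℝ} (ht0 : 0 ≤ t) (ht1 : t ≤ 1/2) :
    P (a0, e0) ≤ ∑ e : E, (∑ a : A, P (a, e) ^ (1/(1-t))) ^ (1-t) := by
  have h1t : (0:ℝ) < 1 - t := by linarith
  have step1 : P (a0, e0) = (P (a0, e0) ^ (1/(1-t))) ^ (1-t) := by
    rw [← Real.rpow_mul (hP0 _), one_div, inv_mul_cancel₀ h1t.ne', Real.rpow_one]
  have step2 : (P (a0, e0) ^ (1/(1-t))) ^ (1-t) ≤ (∑ a : A, P (a, e0) ^ (1/(1-t))) ^ (1-t) := by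
    apply Real.rpow_le_rpow (Real.rpow_nonneg (hP0 _) _) _ h1t.le
    exact Finset.single_le_sum (f := fun a => P (a, e0) ^ (1/(1-t)))
      (fun a _ => Real.rpow_nonneg (hP0 _) _) (Finset.mem_univ a0)
  have step3 : (∑ a : A, P (a, e0) ^ (1/(1-t))) ^ (1-t)
      ≤ ∑ e : E, (∑ a : A, P (a, e) ^ (1/(1-t))) ^ (1-t) :=
    Finset.single_le_sum (f := fun e => (∑ a : A, P (a, e) ^ (1/(1-t))) ^ (1-t))
      (fun e _ => Real.rpow_nonneg
      (Finset.sum_nonneg fun a _ => Real.rpow_nonneg (hP0 _) _) _) (Finset.mem_univ e0)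
  rw [step1]
  exact le_trans step2 step3

lemma psi_lower {A E : Type*} [Fintype A] [Fintype E] (P : A × E → ℝ) (hP0 : ∀ x, 0 ≤ P x)
    (hP1 : ∑ x, P x = 1) (hPE : ∀ e, 0 < ∑ a, P (a, e)) (a0 : A) (e0 : E)
    (hp : 0 < P (a0, e0)) {s : ℝ} (hs0 : 0 ≤ s) (hs1 : s ≤ 1) :
    P (a0, e0) ^ (2:ℝ) ≤ ∑ a : A, ∑ e : E, P (a, e) ^ (1 + s) * (∑ a', P (a', e)) ^ (-s) := by
  have hsum1 : ∑ e : E, ∑ a : A, P (a, e) = 1 := by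
    rw [← hP1, Fintype.sum_prod_type, Finset.sum_comm]
  have hp1 : P (a0, e0) ≤ 1 := by
    rw [← hP1]
    exact Finset.single_le_sum (fun x _ => hP0 x) (Finset.mem_univ _)
  have hS1 : (∑ a, P (a, e0)) ≤ 1 := by
    rw [← hsum1]
    exact Finset.single_le_sum (f := fun e => ∑ a, P (a, e))
      (fun e _ => Finset.sum_nonneg fun a _ => hP0 _) (Finset.mem_univ e0)
  have h1 : P (a0, e0) ^ (2:ℝ) ≤ P (a0, e0) ^ (1 + s) :=
    Real.rpow_le_rpow_of_exponent_ge hp hp1 (by linarith)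
  have h2 : (1:ℝ) ≤ (∑ a, P (a, e0)) ^ (-s) := by
    have := Real.rpow_le_rpow_of_exponent_ge (hPE e0) hS1 (show -s ≤ 0 by linarith)
    rwa [Real.rpow_zero] at this
  calc P (a0, e0) ^ (2:ℝ) = P (a0, e0) ^ (2:ℝ) * 1 := (mul_one _).symm
    _ ≤ P (a0, e0) ^ (1 + s) * (∑ a', P (a', e0)) ^ (-s) :=
        mul_le_mul h1 h2 zero_le_one (Real.rpow_nonneg hp.le _)
    _ ≤ ∑ e : E, P (a0, e) ^ (1 + s) * (∑ a', P (a', e)) ^ (-s) :=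
        Finset.single_le_sum (f := fun e => P (a0, e) ^ (1 + s) * (∑ a', P (a', e)) ^ (-s))
          (fun e _ => mul_nonneg (Real.rpow_nonneg (hP0 _) _)
          (Real.rpow_nonneg (hPE e).le _)) (Finset.mem_univ e0)
    _ ≤ ∑ a : A, ∑ e : E, P (a, e) ^ (1 + s) * (∑ a', P (a', e)) ^ (-s) :=
        Finset.single_le_sum (f := fun a => ∑ e : E, P (a, e) ^ (1 + s) * (∑ a', P (a', e)) ^ (-s))
          (fun a _ => Finset.sum_nonneg fun e _ => mul_nonneg
          (Real.rpow_nonneg (hP0 _) _) (Real.rpow_nonneg (hPE e).le _)) (Finset.mem_univ a0)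
theorem stmt_16 {A E : Type*} [Fintype A] [Nonempty A] [Fintype E] [Nonempty E]
    (P : A × E → ℝ) (hP0 : ∀ x, 0 ≤ P x) (hP1 : ∑ x, P x = 1)
    (hPE : ∀ e : E, 0 < ∑ a, P (a, e)) (R : ℝ) :
    (1 / 2) *
        (⨆ s : Set.Icc (0 : ℝ) 1,
          (- Real.log (∑ a : A, ∑ e : E,
              P (a, e) ^ (1 + (s : ℝ)) * (∑ a', P (a', e)) ^ (-(s : ℝ))) -
            (s : ℝ) * R)) ≤
      (⨆ t : Set.Icc (0 : ℝ) (1 / 2),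
        (- Real.log (∑ e : E,
            (∑ a : A, P (a, e) ^ (1 / (1 - (t : ℝ)))) ^ (1 - (t : ℝ))) -
          (t : ℝ) * R)) ∧
    (⨆ t : Set.Icc (0 : ℝ) (1 / 2),
        (- Real.log (∑ e : E,
            (∑ a : A, P (a, e) ^ (1 / (1 - (t : ℝ)))) ^ (1 - (t : ℝ))) -
          (t : ℝ) * R)) ≤
      (⨆ s : Set.Icc (0 : ℝ) 1,
        (- Real.log (∑ a : A, ∑ e : E,
            P (a, e) ^ (1 + (s : ℝ)) * (∑ a', P (a', e)) ^ (-(s : ℝ))) -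
          (s : ℝ) * R)) := by
  classical
  obtain ⟨⟨a0, e0⟩, hp⟩ := exists_pos_of_sum_pos P hP0 (by rw [hP1]; norm_num)
  haveI : Nonempty (Set.Icc (0:ℝ) 1) := ⟨⟨0, by constructor <;> norm_num⟩⟩
  haveI : Nonempty (Set.Icc (0:ℝ) (1/2)) := ⟨⟨0, by constructor <;> norm_num⟩⟩
  set F : Set.Icc (0:ℝ) 1 → ℝ := fun s =>
    - Real.log (∑ a : A, ∑ e : E,
        P (a, e) ^ (1 + (s : ℝ)) * (∑ a', P (a', e)) ^ (-(s : ℝ))) - (s : ℝ) * R with hF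
  set G : Set.Icc (0:ℝ) (1/2) → ℝ := fun t =>
    - Real.log (∑ e : E,
        (∑ a : A, P (a, e) ^ (1 / (1 - (t : ℝ)))) ^ (1 - (t : ℝ))) - (t : ℝ) * R with hG
  -- boundedness of F
  have hFb : ∀ s : Set.Icc (0:ℝ) 1, F s ≤ - Real.log (P (a0, e0) ^ (2:ℝ)) + |R| := by
    intro s
    have hlow := psi_lower P hP0 hP1 hPE a0 e0 hp s.2.1 s.2.2
    have hlog := Real.log_le_log (Real.rpow_pos_of_pos hp 2) hlow
    have habs : -((s : ℝ) * R) ≤ |R| := by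
      calc -((s : ℝ) * R) ≤ |(s : ℝ) * R| := neg_le_abs _
        _ = (s : ℝ) * |R| := by rw [abs_mul, abs_of_nonneg s.2.1]
        _ ≤ 1 * |R| := mul_le_mul_of_nonneg_right s.2.2 (abs_nonneg R)
        _ = |R| := one_mul _
    simp only [hF]
    linarith
  have bddF : BddAbove (Set.range F) := by
    refine ⟨- Real.log (P (a0, e0) ^ (2:ℝ)) + |R|, ?_⟩
    rintro y ⟨s, rfl⟩
    exact hFb s
  -- boundedness of G
  have hGb : ∀ t : Set.Icc (0:ℝ) (1/2), G t ≤ - Real.log (P (a0, e0)) + |R| := by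
    intro t
    have hlow := phi_lower P hP0 a0 e0 hp t.2.1 t.2.2
    have hlog := Real.log_le_log hp hlow
    have habs : -((t : ℝ) * R) ≤ |R| := by
      calc -((t : ℝ) * R) ≤ |(t : ℝ) * R| := neg_le_abs _
        _ = (t : ℝ) * |R| := by rw [abs_mul, abs_of_nonneg t.2.1]
        _ ≤ 1 * |R| := mul_le_mul_of_nonneg_right (le_trans t.2.2 (by norm_num)) (abs_nonneg R)
        _ = |R| := one_mul _
    simp only [hG]
    linarith
  have bddG : BddAbove (Set.range G) := by
    refine ⟨- Real.log (P (a0, e0)) + |R|, ?_⟩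
    rintro y ⟨t, rfl⟩
    exact hGb t
  constructor
  · -- (1/2) * iSup F ≤ iSup G
    have h2 : iSup F ≤ 2 * iSup G := by
      apply ciSup_le
      intro s
      have hs0 : (0:ℝ) ≤ (s:ℝ) := s.2.1
      have hs1 : (s:ℝ) ≤ 1 := s.2.2
      set t : Set.Icc (0:ℝ) (1/2) := ⟨(s:ℝ)/2, ⟨by linarith, by linarith⟩⟩ with ht
      have key := sumE_A P hP0 hP1 hPE hs0 hs1
      have hφpos := phi_pos P hP0 hPE ((s:ℝ)/2)
      have hψpos := psi_pos P hP0 hP1 hPE (s:ℝ)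
      have hlog : 2 * Real.log (∑ e : E,
          (∑ a : A, P (a, e) ^ (1 / (1 - (s:ℝ)/2))) ^ (1 - (s:ℝ)/2))
          ≤ Real.log (∑ a : A, ∑ e : E,
            P (a, e) ^ (1 + (s:ℝ)) * (∑ a', P (a', e)) ^ (-(s:ℝ))) := by
        have h := Real.log_le_log (pow_pos hφpos 2) key
        rw [Real.log_pow] at h
        push_cast at h
        linarith
      have hFle : F s ≤ 2 * G t := by
        simp only [hF, hG, ht]
        ring_nf
        ring_nf at hlog
        linarith
      calc F s ≤ 2 * G t := hFle
        _ ≤ 2 * iSup G := by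
            have := le_ciSup bddG t
            linarith
    linarith [h2]
  · -- iSup G ≤ iSup F
    apply ciSup_le
    intro t
    have ht0 : (0:ℝ) ≤ (t:ℝ) := t.2.1
    have ht2 : (t:ℝ) ≤ 1/2 := t.2.2
    set s : Set.Icc (0:ℝ) 1 := ⟨(t:ℝ), ⟨ht0, by linarith⟩⟩ with hs
    have key := sumE_B P hP0 hPE ht0 ht2
    have hψpos := psi_pos P hP0 hP1 hPE (t:ℝ)
    have hlog := Real.log_le_log hψpos key
    have hGle : G t ≤ F s := by
      simp only [hF, hG, hs]
      linarith
    exact le_trans hGle (le_ciSup bddF s)
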